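/- Let G be a simple graph on n vertices with adjacency matrix A whose walk matrix W(A) = [e, Ae, …, A^{n−1}e] is invertible. Then G is determined by its generalized spectrum (i.e., every simple graph H with det(xI−A(H))=det(xI−A) and det(xI−(J−I−A(H)))=det(xI−(J−I−A)) satisfies PᵀAP = A(H) for some permutation matrix P) if and only if every rational orthogonal matrix Q with Qe = e such that QᵀAQ is a symmetric 0-1 matrix with zero diagonal is a permutation matrix. -/

import Mathlib

set_option maxHeartbeats 1600000

open Matrix Polynomial

/-- The walk matrix `[e, Ae, A²e, …, A^{n−1}e]` of an `n × n` real matrix `A`. -/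
def walkMatrix {n : ℕ} (A : Matrix (Fin n) (Fin n) ℝ) : Matrix (Fin n) (Fin n) ℝ :=
  Matrix.of fun i j => ((A ^ (j : ℕ)) *ᵥ fun _ => (1 : ℝ)) i

/-- A symmetric real 0-1 matrix with zero diagonal (adjacency matrix of a simple graph). -/
def IsAdjacencyMatrix {n : ℕ} (A : Matrix (Fin n) (Fin n) ℝ) : Prop :=
  A.IsSymm ∧ (∀ i, A i i = 0) ∧ ∀ i j, A i j = 0 ∨ A i j = 1

section Helpers

variable {n : ℕ}

lemma my_eval_charpoly (M : Matrix (Fin n) (Fin n) ℝ) (x : ℝ) :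
    M.charpoly.eval x = (x • (1 : Matrix (Fin n) (Fin n) ℝ) - M).det := by
  rw [Matrix.charpoly, ← coe_evalRingHom, RingHom.map_det]
  congr 1
  ext i j
  rcases eq_or_ne i j with h | h
  · subst h; simp [charmatrix_apply_eq, Matrix.one_apply, Matrix.smul_apply]
  · simp [charmatrix_apply_ne _ _ _ h, Matrix.one_apply_ne h, Matrix.smul_apply, h]

lemma conj_charpoly (Q M : Matrix (Fin n) (Fin n) ℝ) (hQ : Qᵀ * Q = 1) :
    (Qᵀ * M * Q).charpoly = M.charpoly := by
  let C' := (Polynomial.C : ℝ →+* ℝ[X])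
  have hQ' : (Q.map C')ᵀ * Q.map C' = 1 := by
    rw [← Matrix.transpose_map, ← Matrix.map_mul, hQ, Matrix.map_one _ (map_zero C') (map_one C')]
  have hdet : (Q.map C')ᵀ.det * (Q.map C').det = 1 := by
    rw [← det_mul, hQ']; simp
  have hcm : charmatrix (Qᵀ * M * Q) = (Q.map C')ᵀ * charmatrix M * Q.map C' := by
    rw [charmatrix, charmatrix, Matrix.mul_sub, Matrix.sub_mul]
    congr 1
    · rw [scalar_apply, ← smul_one_eq_diagonal, Matrix.mul_smul, Matrix.smul_mul,
        Matrix.mul_one, hQ']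
    · rw [RingHom.mapMatrix_apply, RingHom.mapMatrix_apply, ← Matrix.transpose_map,
        ← Matrix.map_mul, ← Matrix.map_mul]
  rw [Matrix.charpoly, hcm, det_mul, det_mul, Matrix.charpoly]
  rw [mul_comm, ← mul_assoc]
  rw [mul_comm ((Q.map ⇑C').det)]
  rw [hdet, one_mul]

lemma charpoly_shift (A B : Matrix (Fin n) (Fin n) ℝ)
    (h : ((Matrix.of fun _ _ => (1:ℝ)) - 1 - B).charpoly
      = ((Matrix.of fun _ _ => (1:ℝ)) - 1 - A).charpoly) :
    (A - Matrix.of fun _ _ => (1:ℝ)).charpoly = (B - Matrix.of fun _ _ => (1:ℝ)).charpoly := by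
  apply Polynomial.funext
  intro x
  have key : ∀ M : Matrix (Fin n) (Fin n) ℝ,
      x • (1 : Matrix (Fin n) (Fin n) ℝ) - (M - Matrix.of fun _ _ => (1:ℝ))
        = -((-x-1) • 1 - ((Matrix.of fun _ _ => (1:ℝ)) - 1 - M)) := by
    intro M; module
  rw [my_eval_charpoly, my_eval_charpoly, key A, key B, Matrix.det_neg, Matrix.det_neg,
    ← my_eval_charpoly, ← my_eval_charpoly, h]

noncomputable def psS (A : Matrix (Fin n) (Fin n) ℝ) : Matrix (Fin n) (Fin n) (PowerSeries ℝ) :=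
  Matrix.of fun i j => PowerSeries.mk fun k => (A ^ k) i j

lemma psM_mul_psS (A : Matrix (Fin n) (Fin n) ℝ) :
    (1 - (PowerSeries.X : PowerSeries ℝ) • A.map (PowerSeries.C)) * psS A = 1 := by
  rw [Matrix.sub_mul, Matrix.one_mul, Matrix.smul_mul]
  ext i j k
  rw [Matrix.sub_apply, Matrix.smul_apply, smul_eq_mul] at *
  rw [map_sub]
  cases k with
  | zero =>
      rw [PowerSeries.coeff_zero_X_mul]
      simp [psS, Matrix.one_apply, PowerSeries.coeff_mk]
  | succ k =>
      rw [PowerSeries.coeff_succ_X_mul, Matrix.mul_apply]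
      have h1 : (PowerSeries.coeff (k+1)) (psS A i j) = (A ^ (k+1)) i j := by
        simp [psS, PowerSeries.coeff_mk]
      have h2 : ∀ l, (PowerSeries.coeff k) (A.map (PowerSeries.C) i l * psS A l j)
          = A i l * (A ^ k) l j := by
        intro l
        simp [psS, Matrix.map_apply, PowerSeries.coeff_C_mul, PowerSeries.coeff_mk]
      rw [map_sum]
      simp only [h2]
      rw [h1, ← Matrix.mul_apply, ← pow_succ']
      simp [Matrix.one_apply]
      split_ifs <;> simp [PowerSeries.coeff_one]

noncomputable def phiPS : ℝ[X] →+* PowerSeries ℝ := Polynomial.coeToPowerSeries.ringHom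

lemma phi_charpolyRev (M : Matrix (Fin n) (Fin n) ℝ) :
    phiPS M.charpolyRev
      = Matrix.det (1 - (PowerSeries.X : PowerSeries ℝ) • M.map (PowerSeries.C)) := by
  rw [charpolyRev, RingHom.map_det]
  congr 1
  refine Matrix.ext fun i j => ?_
  rw [RingHom.mapMatrix_apply, Matrix.map_apply, Matrix.sub_apply, Matrix.sub_apply,
    Matrix.smul_apply, Matrix.smul_apply, map_sub, smul_eq_mul, smul_eq_mul, _root_.map_mul]
  congr 1
  · rcases eq_or_ne i j with h | h <;>
      simp [h, Matrix.one_apply, phiPS, _root_.map_one, _root_.map_zero]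
  · simp [Matrix.map_apply, phiPS, Polynomial.coeToPowerSeries.ringHom_apply,
      Polynomial.coe_X, Polynomial.coe_C]

lemma det_rankone (A : Matrix (Fin n) (Fin n) ℝ) :
    Matrix.det (1 - (PowerSeries.X : PowerSeries ℝ) •
        (A - Matrix.of fun _ _ => (1:ℝ)).map (PowerSeries.C))
      = Matrix.det (1 - (PowerSeries.X : PowerSeries ℝ) • A.map (PowerSeries.C))
        * (1 + PowerSeries.X *
            ((fun _ => (1:PowerSeries ℝ)) ⬝ᵥ (psS A *ᵥ fun _ => (1:PowerSeries ℝ)))) := by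
  set Xp : PowerSeries ℝ := PowerSeries.X with hXp
  set Jc : Matrix (Fin n) (Fin n) (PowerSeries ℝ) :=
    (Matrix.of fun _ _ => (1:ℝ)).map (PowerSeries.C) with hJc
  set M : Matrix (Fin n) (Fin n) (PowerSeries ℝ) := 1 - Xp • A.map (PowerSeries.C) with hM
  have hmap : (A - Matrix.of fun _ _ => (1:ℝ)).map (PowerSeries.C)
      = A.map (PowerSeries.C) - Jc := by
    refine Matrix.ext fun i j => ?_; simp [Matrix.map_apply, map_sub, hJc]
  have key : (1 - Xp • (A - Matrix.of fun _ _ => (1:ℝ)).map (PowerSeries.C))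
      = M * (1 + Xp • (psS A * Jc)) := by
    rw [hmap, smul_sub]
    rw [Matrix.mul_add, Matrix.mul_one, Matrix.mul_smul, ← Matrix.mul_assoc,
      psM_mul_psS, Matrix.one_mul]
    rw [hM]
    abel
  rw [key, det_mul]
  congr 1
  have hcr : Xp • (psS A * Jc)
      = Matrix.replicateCol Unit (Xp • (psS A *ᵥ fun _ => (1:PowerSeries ℝ)))
          * Matrix.replicateRow Unit (fun _ => (1:PowerSeries ℝ)) := by
    refine Matrix.ext fun i j => ?_
    simp [Matrix.mul_apply, Matrix.replicateCol_apply, Matrix.replicateRow_apply, Matrix.smul_apply,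
      Matrix.mulVec, dotProduct, hJc, Matrix.map_apply, Finset.mul_sum]
  rw [hcr, Matrix.det_one_add_replicateCol_mul_replicateRow]
  congr 1
  simp [dotProduct, Pi.smul_apply, smul_eq_mul, Finset.mul_sum]

lemma moments (A B : Matrix (Fin n) (Fin n) ℝ)
    (h1 : B.charpoly = A.charpoly)
    (h2 : ((Matrix.of fun _ _ => (1:ℝ)) - 1 - B).charpoly
      = ((Matrix.of fun _ _ => (1:ℝ)) - 1 - A).charpoly) :
    ∀ k : ℕ, ∑ i, ∑ j, (A ^ k) i j = ∑ i, ∑ j, (B ^ k) i j := by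
  have hr1 : B.charpolyRev = A.charpolyRev := by
    rw [← Matrix.reverse_charpoly, ← Matrix.reverse_charpoly, h1]
  have hsh := charpoly_shift A B h2
  have hr2 : (A - Matrix.of fun _ _ => (1:ℝ)).charpolyRev
      = (B - Matrix.of fun _ _ => (1:ℝ)).charpolyRev := by
    rw [← Matrix.reverse_charpoly, ← Matrix.reverse_charpoly, hsh]
  set rA : PowerSeries ℝ :=
    (fun _ => (1:PowerSeries ℝ)) ⬝ᵥ (psS A *ᵥ fun _ => (1:PowerSeries ℝ)) with hrA
  set rB : PowerSeries ℝ :=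
    (fun _ => (1:PowerSeries ℝ)) ⬝ᵥ (psS B *ᵥ fun _ => (1:PowerSeries ℝ)) with hrB
  have key : phiPS A.charpolyRev * (1 + PowerSeries.X * rA)
      = phiPS A.charpolyRev * (1 + PowerSeries.X * rB) := by
    conv_lhs => rw [phi_charpolyRev, ← det_rankone, ← phi_charpolyRev, hr2,
      phi_charpolyRev, det_rankone, ← phi_charpolyRev, hr1]
  have hne : phiPS A.charpolyRev ≠ 0 := by
    intro hzero
    have hc : PowerSeries.constantCoeff (phiPS A.charpolyRev) = 1 := by
      have : PowerSeries.constantCoeff (phiPS A.charpolyRev)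
          = Polynomial.eval 0 A.charpolyRev := by
        simp [phiPS, Polynomial.coeToPowerSeries.ringHom_apply,
          PowerSeries.coeff_zero_eq_constantCoeff.symm, Polynomial.coeff_coe,
          Polynomial.coeff_zero_eq_eval_zero]
      rw [this, Matrix.eval_charpolyRev]
    rw [hzero] at hc
    simp at hc
  have h3 : rA = rB := by
    have h4 := mul_left_cancel₀ hne key
    exact mul_left_cancel₀ PowerSeries.X_ne_zero (add_left_cancel h4)
  intro k
  have := congrArg (PowerSeries.coeff k) h3
  simpa [hrA, hrB, dotProduct, Matrix.mulVec, psS, map_sum,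
    PowerSeries.coeff_mk] using this

lemma gram (A : Matrix (Fin n) (Fin n) ℝ) (hs : A.IsSymm) (i j : Fin n) :
    ((walkMatrix A)ᵀ * walkMatrix A) i j = ∑ x, ∑ y, (A ^ ((i:ℕ) + (j:ℕ))) x y := by
  have hsym : ∀ (k:ℕ) (x y : Fin n), (A ^ k) x y = (A ^ k) y x := by
    intro k x y
    have := hs.pow k
    conv_lhs => rw [← this]
    rfl
  rw [Matrix.mul_apply]
  simp only [Matrix.transpose_apply, walkMatrix, Matrix.of_apply, Matrix.mulVec,
    dotProduct, mul_one]
  calc ∑ l, (∑ x, (A^(i:ℕ)) l x) * (∑ y, (A^(j:ℕ)) l y)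
      = ∑ l, ∑ x, ∑ y, (A^(i:ℕ)) x l * (A^(j:ℕ)) l y := by
        refine Finset.sum_congr rfl fun l _ => ?_
        rw [Finset.sum_mul_sum]
        exact Finset.sum_congr rfl fun x _ => Finset.sum_congr rfl fun y _ => by rw [hsym]
    _ = ∑ x, ∑ l, ∑ y, (A^(i:ℕ)) x l * (A^(j:ℕ)) l y := Finset.sum_comm
    _ = ∑ x, ∑ y, ∑ l, (A^(i:ℕ)) x l * (A^(j:ℕ)) l y :=
        Finset.sum_congr rfl fun x _ => Finset.sum_comm
    _ = ∑ x, ∑ y, (A ^ ((i:ℕ) + (j:ℕ))) x y := by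
        simp [pow_add, Matrix.mul_apply]

lemma transpose_mul_walk (A B X : Matrix (Fin n) (Fin n) ℝ)
    (hX : Xᵀ * X = 1) (hXe : X *ᵥ (fun _ => (1:ℝ)) = fun _ => 1)
    (hXA : Xᵀ * A * X = B) : Xᵀ * walkMatrix A = walkMatrix B := by
  have hX' : X * Xᵀ = 1 := mul_eq_one_comm.mp hX
  have hXte : Xᵀ *ᵥ (fun _ => (1:ℝ)) = fun _ => 1 := by
    conv_lhs => rw [← hXe]
    rw [Matrix.mulVec_mulVec, hX, Matrix.one_mulVec]
  have hcomm : Xᵀ * A = B * Xᵀ := by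
    rw [← hXA, Matrix.mul_assoc, Matrix.mul_assoc, hX', Matrix.mul_one]
  have hpow : ∀ k : ℕ, Xᵀ * A ^ k = B ^ k * Xᵀ := by
    intro k; induction k with
    | zero => simp
    | succ k ih =>
        rw [pow_succ', ← Matrix.mul_assoc, hcomm, Matrix.mul_assoc, ih, pow_succ',
          Matrix.mul_assoc]
  ext i j
  rw [Matrix.mul_apply]
  show ∑ l, Xᵀ i l * ((A ^ (j:ℕ)) *ᵥ fun _ => 1) l = walkMatrix B i j
  have : Xᵀ *ᵥ ((A ^ (j:ℕ)) *ᵥ fun _ => 1) = (B ^ (j:ℕ)) *ᵥ fun _ => 1 := by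
    rw [Matrix.mulVec_mulVec, hpow, ← Matrix.mulVec_mulVec, hXte]
  exact congrFun this i

lemma perm_orth (σ : Equiv.Perm (Fin n)) : (σ.permMatrix ℝ)ᵀ * σ.permMatrix ℝ = 1 := by
  rw [Equiv.Perm.permMatrix, ← PEquiv.toMatrix_symm, ← PEquiv.toMatrix_trans,
    ← Equiv.toPEquiv_symm, ← Equiv.toPEquiv_trans]
  simp

lemma perm_mulVec_one (σ : Equiv.Perm (Fin n)) :
    (σ.permMatrix ℝ) *ᵥ (fun _ => (1:ℝ)) = fun _ => 1 := by
  funext i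
  simp [Matrix.mulVec, dotProduct, Equiv.Perm.permMatrix, PEquiv.toMatrix_apply,
    Equiv.toPEquiv_apply]

lemma map_ratCast_inv (M0 : Matrix (Fin n) (Fin n) ℚ)
    (h : (M0.map (fun q : ℚ => (q:ℝ))).det ≠ 0) :
    (M0.map (fun q : ℚ => (q:ℝ)))⁻¹ = M0⁻¹.map (fun q : ℚ => (q:ℝ)) := by
  have hdet0 : M0.det ≠ 0 := by
    intro h0
    apply h
    have : (M0.map (fun q : ℚ => (q:ℝ))).det = ((M0.det : ℚ) : ℝ) := by
      rw [show (fun q : ℚ => (q:ℝ)) = ⇑(Rat.castHom ℝ) from rfl, ← RingHom.mapMatrix_apply,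
        ← RingHom.map_det]
      rfl
    rw [this, h0]; simp
  apply Matrix.inv_eq_right_inv
  rw [show (fun q : ℚ => (q:ℝ)) = ⇑(Rat.castHom ℝ) from rfl, ← Matrix.map_mul,
    Matrix.mul_nonsing_inv _ (isUnit_iff_ne_zero.mpr hdet0)]
  exact Matrix.map_one _ (by simp) (by simp)

def walkQ (M : Matrix (Fin n) (Fin n) ℚ) : Matrix (Fin n) (Fin n) ℚ :=
  Matrix.of fun i j => ((M ^ (j : ℕ)) *ᵥ fun _ => (1 : ℚ)) i

lemma walk_map (M0 : Matrix (Fin n) (Fin n) ℚ) :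
    walkMatrix (M0.map (fun q : ℚ => (q:ℝ))) = (walkQ M0).map (fun q : ℚ => (q:ℝ)) := by
  refine Matrix.ext fun i j => ?_
  have hpow : (M0.map (fun q : ℚ => (q:ℝ))) ^ (j:ℕ) = (M0 ^ (j:ℕ)).map (fun q : ℚ => (q:ℝ)) := by
    rw [show (fun q : ℚ => (q:ℝ)) = ⇑(Rat.castHom ℝ) from rfl, ← RingHom.mapMatrix_apply,
      ← RingHom.mapMatrix_apply, ← map_pow]
  simp only [walkMatrix, walkQ, Matrix.of_apply, Matrix.map_apply, hpow,
    Matrix.mulVec, dotProduct, mul_one]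
  push_cast
  rfl

lemma walk_extend_top (A B Qt : Matrix (Fin n) (Fin n) ℝ) (h1 : B.charpoly = A.charpoly)
    (hcolW : ∀ j : Fin n, Qt *ᵥ ((A^(j:ℕ)) *ᵥ (fun _ => (1:ℝ))) = (B^(j:ℕ)) *ᵥ (fun _ => 1)) :
    Qt *ᵥ ((A^n) *ᵥ (fun _ => (1:ℝ))) = (B^n) *ᵥ (fun _ => 1) := by
  have hdegA : A.charpoly.natDegree = n := by
    rw [Matrix.charpoly_natDegree_eq_dim, Fintype.card_fin]
  have hsum : ∀ (M : Matrix (Fin n) (Fin n) ℝ), M.charpoly = A.charpoly →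
      M ^ n = -(∑ i ∈ Finset.range n, A.charpoly.coeff i • M ^ i) := by
    intro M hM
    have h0 : (Polynomial.aeval M) A.charpoly = 0 := by
      rw [← hM]; exact M.aeval_self_charpoly
    rw [Polynomial.aeval_eq_sum_range, hdegA, Finset.sum_range_succ] at h0
    have hcn : A.charpoly.coeff n = 1 := by
      have := (Matrix.charpoly_monic A).coeff_natDegree
      rwa [hdegA] at this
    rw [hcn, one_smul] at h0
    linear_combination (norm := abel) h0
  have expand : ∀ (M : Matrix (Fin n) (Fin n) ℝ), M.charpoly = A.charpoly →
      (M ^ n) *ᵥ (fun _ => (1:ℝ))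
        = -(∑ i ∈ Finset.range n, A.charpoly.coeff i • ((M ^ i) *ᵥ (fun _ => (1:ℝ)))) := by
    intro M hM
    rw [hsum M hM, Matrix.neg_mulVec]
    congr 1
    rw [show (∑ i ∈ Finset.range n, A.charpoly.coeff i • M ^ i) *ᵥ (fun _ => (1:ℝ))
        = (Matrix.mulVec.addMonoidHomLeft (fun _ => (1:ℝ)))
            (∑ i ∈ Finset.range n, A.charpoly.coeff i • M ^ i) from rfl, map_sum]
    refine Finset.sum_congr rfl fun i _ => ?_
    show (A.charpoly.coeff i • M ^ i) *ᵥ _ = _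
    rw [Matrix.smul_mulVec]
  rw [expand A rfl, expand B h1, Matrix.mulVec_neg]
  congr 1
  rw [← Matrix.mulVecLin_apply, map_sum]
  refine Finset.sum_congr rfl fun i hi => ?_
  rw [_root_.map_smul, Matrix.mulVecLin_apply, hcolW ⟨i, Finset.mem_range.mp hi⟩]

lemma walk_extend (A B Qt : Matrix (Fin n) (Fin n) ℝ) (h1 : B.charpoly = A.charpoly)
    (hcolW : ∀ j : Fin n, Qt *ᵥ ((A^(j:ℕ)) *ᵥ (fun _ => (1:ℝ))) = (B^(j:ℕ)) *ᵥ (fun _ => 1)) :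
    ∀ k ≤ n, Qt *ᵥ ((A^k) *ᵥ (fun _ => (1:ℝ))) = (B^k) *ᵥ (fun _ => 1) := by
  intro k hk
  rcases lt_or_eq_of_le hk with hlt | heq
  · exact hcolW ⟨k, hlt⟩
  · rw [heq]
    exact walk_extend_top A B Qt h1 hcolW

end Helpers

theorem stmt5 {n : ℕ} (A : Matrix (Fin n) (Fin n) ℝ)
    (hA : IsAdjacencyMatrix A)
    (hW : (walkMatrix A).det ≠ 0) :
    (∀ B : Matrix (Fin n) (Fin n) ℝ, IsAdjacencyMatrix B →
        B.charpoly = A.charpoly →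
        ((Matrix.of fun _ _ => (1 : ℝ)) - 1 - B).charpoly
          = ((Matrix.of fun _ _ => (1 : ℝ)) - 1 - A).charpoly →
        ∃ σ : Equiv.Perm (Fin n), (σ.permMatrix ℝ)ᵀ * A * σ.permMatrix ℝ = B)
    ↔ (∀ Q : Matrix (Fin n) (Fin n) ℝ,
        Qᵀ * Q = 1 → (Q *ᵥ fun _ => (1 : ℝ)) = (fun _ => (1 : ℝ)) →
        (∀ i j, ∃ q : ℚ, Q i j = (q : ℝ)) →
        IsAdjacencyMatrix (Qᵀ * A * Q) →
        ∃ σ : Equiv.Perm (Fin n), Q = σ.permMatrix ℝ) := by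
  constructor
  · -- DGS → orthogonal matrices are permutations
    intro hDGS Q hQo hQe hQrat hQadj
    set B := Qᵀ * A * Q with hB
    have hQQt : Q * Qᵀ = 1 := mul_eq_one_comm.mp hQo
    have hQte : Qᵀ *ᵥ (fun _ => (1:ℝ)) = fun _ => 1 := by
      conv_lhs => rw [← hQe]
      rw [Matrix.mulVec_mulVec, hQo, Matrix.one_mulVec]
    have hcolsum : ∀ i, ∑ l, Q l i = 1 := by
      intro i
      have := congrFun hQte i
      simpa [Matrix.mulVec, dotProduct] using this
    have hJ : Qᵀ * (Matrix.of fun _ _ => (1:ℝ)) * Q = Matrix.of fun _ _ => (1:ℝ) := by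
      refine Matrix.ext fun i j => ?_
      rw [Matrix.mul_apply]
      have h1 : ∀ k, (Qᵀ * (Matrix.of fun _ _ => (1:ℝ) : Matrix (Fin n) (Fin n) ℝ)) i k = 1 := by
        intro k
        rw [Matrix.mul_apply]
        simpa [Matrix.transpose_apply] using hcolsum i
      simp only [h1, one_mul]
      simpa using hcolsum j
    have h1 : B.charpoly = A.charpoly := conj_charpoly Q A hQo
    have hconj : Qᵀ * ((Matrix.of fun _ _ => (1:ℝ)) - 1 - A) * Q
        = (Matrix.of fun _ _ => (1:ℝ)) - 1 - B := by
      rw [Matrix.mul_sub, Matrix.mul_sub, Matrix.sub_mul, Matrix.sub_mul, Matrix.mul_one]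
      rw [hJ, hQo, hB]
    have h2 : ((Matrix.of fun _ _ => (1:ℝ)) - 1 - B).charpoly
        = ((Matrix.of fun _ _ => (1:ℝ)) - 1 - A).charpoly := by
      rw [← hconj]; exact conj_charpoly Q _ hQo
    obtain ⟨σ, hσ⟩ := hDGS B hQadj h1 h2
    refine ⟨σ, ?_⟩
    have hQW : Qᵀ * walkMatrix A = walkMatrix B := transpose_mul_walk A B Q hQo hQe rfl
    have hPW : (σ.permMatrix ℝ)ᵀ * walkMatrix A = walkMatrix B :=
      transpose_mul_walk A B _ (perm_orth σ) (perm_mulVec_one σ) hσ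
    have hWu : IsUnit (walkMatrix A).det := isUnit_iff_ne_zero.mpr hW
    have ht : Qᵀ = (σ.permMatrix ℝ)ᵀ := by
      calc Qᵀ = Qᵀ * walkMatrix A * (walkMatrix A)⁻¹ := by
            rw [Matrix.mul_assoc, Matrix.mul_nonsing_inv _ hWu, Matrix.mul_one]
        _ = (σ.permMatrix ℝ)ᵀ * walkMatrix A * (walkMatrix A)⁻¹ := by rw [hQW, hPW]
        _ = (σ.permMatrix ℝ)ᵀ := by
            rw [Matrix.mul_assoc, Matrix.mul_nonsing_inv _ hWu, Matrix.mul_one]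
    rw [← Matrix.transpose_transpose Q, ht, Matrix.transpose_transpose]
  · -- orthogonal ⇒ permutation implies DGS
    intro hOrth B hBadj h1 h2
    rcases Nat.eq_zero_or_pos n with hn | hn
    · subst hn
      exact ⟨1, by ext i j; exact i.elim0⟩
    have mom := moments A B h1 h2
    set WA := walkMatrix A with hWAdef
    set WB := walkMatrix B with hWBdef
    have hGram : WBᵀ * WB = WAᵀ * WA := by
      refine Matrix.ext fun i j => ?_
      rw [hWAdef, hWBdef, gram B hBadj.1, gram A hA.1, mom]
    have hWB : WB.det ≠ 0 := by
      have hd := congrArg Matrix.det hGram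
      rw [det_mul, det_mul, det_transpose, det_transpose] at hd
      intro h0
      rw [h0, mul_zero] at hd
      exact hW (mul_self_eq_zero.mp hd.symm)
    have hWAu : IsUnit WA.det := isUnit_iff_ne_zero.mpr hW
    have hWBu : IsUnit WB.det := isUnit_iff_ne_zero.mpr hWB
    have hWBtu : IsUnit WBᵀ.det := by rw [Matrix.det_transpose]; exact hWBu
    set Qt := WB * WA⁻¹ with hQtdef
    have hQtW : Qt * WA = WB := by
      rw [hQtdef, Matrix.mul_assoc, Matrix.nonsing_inv_mul _ hWAu, Matrix.mul_one]
    have hmid : WA⁻¹ * (WA⁻¹)ᵀ = WB⁻¹ * (WBᵀ)⁻¹ := by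
      rw [Matrix.transpose_nonsing_inv, ← Matrix.mul_inv_rev, ← hGram, Matrix.mul_inv_rev]
    have hQtQtT : Qt * Qtᵀ = 1 := by
      rw [hQtdef, Matrix.transpose_mul, Matrix.mul_assoc, ← Matrix.mul_assoc (WA⁻¹), hmid]
      rw [← Matrix.mul_assoc, ← Matrix.mul_assoc, Matrix.mul_nonsing_inv _ hWBu,
        Matrix.one_mul, Matrix.nonsing_inv_mul _ hWBtu]
    have hentryA : ∀ (M : Matrix (Fin n) (Fin n) ℝ) (i j : Fin n),
        (M * WA) i j = (M *ᵥ ((A^(j:ℕ)) *ᵥ (fun _ => (1:ℝ)))) i := fun M i j => rfl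
    have hcolW : ∀ j : Fin n,
        Qt *ᵥ ((A^(j:ℕ)) *ᵥ (fun _ => (1:ℝ))) = (B^(j:ℕ)) *ᵥ (fun _ => 1) := by
      intro j
      funext i
      have h : (Qt * WA) i j = WB i j := by rw [hQtW]
      rw [hentryA] at h
      rw [h]
      rfl
    have hext := walk_extend A B Qt h1 hcolW
    have hQte : Qt *ᵥ (fun _ => (1:ℝ)) = fun _ => 1 := by
      have := hcolW ⟨0, hn⟩
      simpa [Matrix.one_mulVec] using this
    have hAW : Qt * A * WA = B * Qt * WA := by
      refine Matrix.ext fun i j => ?_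
      rw [hentryA, hentryA]
      have hL : (Qt * A) *ᵥ ((A^(j:ℕ)) *ᵥ (fun _ => (1:ℝ)))
          = (B^((j:ℕ)+1)) *ᵥ (fun _ => 1) := by
        rw [← Matrix.mulVec_mulVec, Matrix.mulVec_mulVec (fun _ => (1:ℝ)) A (A ^ (j:ℕ)),
          ← pow_succ']
        exact hext ((j:ℕ)+1) (Nat.succ_le_of_lt j.2)
      have hR : (B * Qt) *ᵥ ((A^(j:ℕ)) *ᵥ (fun _ => (1:ℝ)))
          = (B^((j:ℕ)+1)) *ᵥ (fun _ => 1) := by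
        rw [← Matrix.mulVec_mulVec, hcolW j, Matrix.mulVec_mulVec, ← pow_succ']
      rw [hL, hR]
    have hQtA : Qt * A = B * Qt := by
      calc Qt * A = Qt * A * WA * WA⁻¹ := by
            rw [Matrix.mul_assoc (Qt * A), Matrix.mul_nonsing_inv _ hWAu, Matrix.mul_one]
        _ = B * Qt * WA * WA⁻¹ := by rw [hAW]
        _ = B * Qt := by
            rw [Matrix.mul_assoc (B * Qt), Matrix.mul_nonsing_inv _ hWAu, Matrix.mul_one]
    have hQAQ : Qtᵀᵀ * A * Qtᵀ = B := by
      rw [Matrix.transpose_transpose, hQtA, Matrix.mul_assoc, hQtQtT, Matrix.mul_one]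
    have hQo' : Qtᵀᵀ * Qtᵀ = 1 := by rw [Matrix.transpose_transpose]; exact hQtQtT
    have hQe' : Qtᵀ *ᵥ (fun _ => (1:ℝ)) = fun _ => 1 := by
      conv_lhs => rw [← hQte]
      rw [Matrix.mulVec_mulVec, mul_eq_one_comm.mp hQtQtT, Matrix.one_mulVec]
    have hQrat : ∀ i j, ∃ q : ℚ, Qtᵀ i j = (q : ℝ) := by
      classical
      have hcast : ∀ (M : Matrix (Fin n) (Fin n) ℝ), IsAdjacencyMatrix M →
          ∃ M0 : Matrix (Fin n) (Fin n) ℚ, M = M0.map (fun q : ℚ => (q:ℝ)) := by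
        intro M hM
        refine ⟨Matrix.of fun i j => if M i j = 1 then 1 else 0, ?_⟩
        refine Matrix.ext fun i j => ?_
        rcases hM.2.2 i j with h | h <;> simp [Matrix.map_apply, h]
      obtain ⟨A0, hA0⟩ := hcast A hA
      obtain ⟨B0, hB0⟩ := hcast B hBadj
      have hWAm : WA = (walkQ A0).map (fun q : ℚ => (q:ℝ)) := by
        rw [hWAdef, hA0, walk_map]
      have hWBm : WB = (walkQ B0).map (fun q : ℚ => (q:ℝ)) := by
        rw [hWBdef, hB0, walk_map]
      have hdetA0 : ((walkQ A0).map (fun q : ℚ => (q:ℝ))).det ≠ 0 := by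
        rw [← hWAm]; exact hW
      have hQtm : Qt = ((walkQ B0) * (walkQ A0)⁻¹).map (fun q : ℚ => (q:ℝ)) := by
        rw [hQtdef, hWAm, hWBm, map_ratCast_inv _ hdetA0,
          show (fun q : ℚ => (q:ℝ)) = ⇑(Rat.castHom ℝ) from rfl, ← Matrix.map_mul]
      intro i j
      exact ⟨((walkQ B0) * (walkQ A0)⁻¹) j i, by rw [Matrix.transpose_apply, hQtm]; rfl⟩
    have hadj : IsAdjacencyMatrix (Qtᵀᵀ * A * Qtᵀ) := by rw [hQAQ]; exact hBadj
    obtain ⟨σ, hσ⟩ := hOrth Qtᵀ hQo' hQe' hQrat hadj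
    exact ⟨σ, by rw [← hσ]; exact hQAQ⟩
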